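/- arXiv:2204.08854 — 2 statements merged into one kernel-verified Lean document; each statement's English description precedes it below -/
import Mathlib

section
/- Let Q be the quadratic form of signature (p+1, q) on ℝ^{p+q+1} with p < q. Then there exists an element g ∈ O(p+1, q) of infinite order such that the cyclic group ⟨g⟩ acts properly discontinuously on X(p,q) = Q⁻¹(1). Concretely, for p < q one may take g to be a hyperbolic element acting by cosh/sinh rotation in a hyperbolic plane positive-negative coordinate pair, with all powers gⁿ moving every point of X(p,q) off any fixed compact set. -/
/-- The standard quadratic form of signature `(p+1, q)` on `ℝ^{p+q+1}`. -/
noncomputable def spaceFormQ (p q : ℕ) (x : EuclideanSpace ℝ (Fin (p + q + 1))) : ℝ :=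
  ∑ i : Fin (p + q + 1), if (i : ℕ) < p + 1 then (x i) ^ 2 else -((x i) ^ 2)

section Aux
variable (p q : ℕ) (hpq : p < q)

/-- coordinate reading with junk value -/
noncomputable def xv (x : EuclideanSpace ℝ (Fin (p + q + 1))) (n : ℕ) : ℝ :=
  if h : n < p + q + 1 then x ⟨n, h⟩ else 0

lemma xv_mk (x : EuclideanSpace ℝ (Fin (p + q + 1))) (n : ℕ) (h : n < p + q + 1) :
    xv p q x n = x ⟨n, h⟩ := dif_pos h

/-- boost matrix in the (k, k+p+1) planes, k < p+1 -/
noncomputable def bmap (c s : ℝ) :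
    EuclideanSpace ℝ (Fin (p + q + 1)) →ₗ[ℝ] EuclideanSpace ℝ (Fin (p + q + 1)) where
  toFun x := WithLp.toLp 2 fun (i : Fin (p + q + 1)) =>
    if h1 : (i : ℕ) < p + 1 then c * x i + s * x ⟨(i : ℕ) + (p + 1), by omega⟩
    else if h2 : (i : ℕ) < 2 * p + 2 then s * x ⟨(i : ℕ) - (p + 1), by omega⟩ + c * x i
    else x i
  map_add' x y := by
    ext i
    simp only [PiLp.add_apply, PiLp.toLp_apply]
    split_ifs <;> ring
  map_smul' r x := by
    ext i
    simp only [PiLp.smul_apply, smul_eq_mul, PiLp.toLp_apply, RingHom.id_apply]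
    split_ifs <;> ring

lemma bmap_lo (c s : ℝ) (x : EuclideanSpace ℝ (Fin (p + q + 1))) (k : ℕ) (hk : k < p + 1) :
    xv p q (bmap p q hpq c s x) k = c * xv p q x k + s * xv p q x (k + (p + 1)) := by
  rw [xv_mk p q _ k (by omega), xv_mk p q x k (by omega), xv_mk p q x (k + (p+1)) (by omega)]
  simp only [bmap, LinearMap.coe_mk, AddHom.coe_mk]
  rw [dif_pos hk]

lemma bmap_hi (c s : ℝ) (x : EuclideanSpace ℝ (Fin (p + q + 1))) (k : ℕ) (hk : k < p + 1) :
    xv p q (bmap p q hpq c s x) (k + (p + 1)) =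
      s * xv p q x k + c * xv p q x (k + (p + 1)) := by
  rw [xv_mk p q _ _ (by omega), xv_mk p q x k (by omega), xv_mk p q x (k + (p+1)) (by omega)]
  simp only [bmap, LinearMap.coe_mk, AddHom.coe_mk]
  rw [dif_neg (by omega), dif_pos (by omega)]
  show s * x ⟨k + (p + 1) - (p + 1), by omega⟩ + c * x ⟨k + (p + 1), by omega⟩ =
      s * x ⟨k, by omega⟩ + c * x ⟨k + (p + 1), by omega⟩
  have hidx : (⟨k + (p + 1) - (p + 1), by omega⟩ : Fin (p + q + 1)) = ⟨k, by omega⟩ :=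
    Fin.ext (by simp)
  rw [hidx]

lemma bmap_rest (c s : ℝ) (x : EuclideanSpace ℝ (Fin (p + q + 1))) (k : ℕ)
    (hk : 2 * p + 2 ≤ k) :
    xv p q (bmap p q hpq c s x) k = xv p q x k := by
  unfold xv
  split_ifs with h
  · simp only [bmap, LinearMap.coe_mk, AddHom.coe_mk]
    rw [dif_neg (by omega), dif_neg (by omega)]
  · rfl

lemma bmap_inv (c s : ℝ) (h : c ^ 2 - s ^ 2 = 1) (x : EuclideanSpace ℝ (Fin (p + q + 1))) :
    bmap p q hpq c s (bmap p q hpq c (-s) x) = x := by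
  ext i
  obtain ⟨k, hkN⟩ := i
  have key : xv p q (bmap p q hpq c s (bmap p q hpq c (-s) x)) k = xv p q x k := by
    rcases lt_or_ge k (p + 1) with hk | hk
    · rw [bmap_lo p q hpq _ _ _ _ hk, bmap_lo p q hpq _ _ _ _ hk, bmap_hi p q hpq _ _ _ _ hk]
      linear_combination (xv p q x k) * h
    rcases lt_or_ge k (2 * p + 2) with hk2 | hk2
    · obtain ⟨m, rfl⟩ : ∃ m, k = m + (p + 1) := ⟨k - (p + 1), by omega⟩
      have hm : m < p + 1 := by omega
      rw [bmap_hi p q hpq _ _ _ _ hm, bmap_hi p q hpq _ _ _ _ hm, bmap_lo p q hpq _ _ _ _ hm]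
      linear_combination (xv p q x (m + (p + 1))) * h
    · rw [bmap_rest p q hpq _ _ _ _ hk2, bmap_rest p q hpq _ _ _ _ hk2]
  rwa [xv_mk p q _ k hkN, xv_mk p q x k hkN] at key

/-- the boost element of `O(p+1,q)` -/
noncomputable def gmap :
    EuclideanSpace ℝ (Fin (p + q + 1)) ≃ₗ[ℝ] EuclideanSpace ℝ (Fin (p + q + 1)) :=
  LinearEquiv.ofLinear (bmap p q hpq (5/3) (4/3)) (bmap p q hpq (5/3) (-(4/3)))
    (LinearMap.ext fun x => bmap_inv p q hpq (5/3) (4/3) (by norm_num) x)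
    (LinearMap.ext fun x => by
      have := bmap_inv p q hpq (5/3) (-(4/3)) (by norm_num) x
      rw [neg_neg] at this
      exact this)

lemma gmap_apply (x) : gmap p q hpq x = bmap p q hpq (5/3) (4/3) x := rfl

lemma gmap_symm_apply (x) : (gmap p q hpq).symm x = bmap p q hpq (5/3) (-(4/3)) x := rfl

/-- lightcone coordinate functionals -/
noncomputable def Af (k : ℕ) (x : EuclideanSpace ℝ (Fin (p + q + 1))) : ℝ :=
  xv p q x k + xv p q x (k + (p + 1))

noncomputable def Bf (k : ℕ) (x : EuclideanSpace ℝ (Fin (p + q + 1))) : ℝ :=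
  xv p q x k - xv p q x (k + (p + 1))

lemma Af_gmap (k : ℕ) (hk : k < p + 1) (x) :
    Af p q k (gmap p q hpq x) = 3 * Af p q k x := by
  unfold Af
  rw [gmap_apply, bmap_lo p q hpq _ _ _ _ hk, bmap_hi p q hpq _ _ _ _ hk]
  ring

lemma Bf_gmap (k : ℕ) (hk : k < p + 1) (x) :
    Bf p q k (gmap p q hpq x) = (1/3) * Bf p q k x := by
  unfold Bf
  rw [gmap_apply, bmap_lo p q hpq _ _ _ _ hk, bmap_hi p q hpq _ _ _ _ hk]
  ring

lemma Af_gmap_symm (k : ℕ) (hk : k < p + 1) (x) :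
    Af p q k ((gmap p q hpq).symm x) = (1/3) * Af p q k x := by
  unfold Af
  rw [gmap_symm_apply, bmap_lo p q hpq _ _ _ _ hk, bmap_hi p q hpq _ _ _ _ hk]
  ring

lemma Bf_gmap_symm (k : ℕ) (hk : k < p + 1) (x) :
    Bf p q k ((gmap p q hpq).symm x) = 3 * Bf p q k x := by
  unfold Bf
  rw [gmap_symm_apply, bmap_lo p q hpq _ _ _ _ hk, bmap_hi p q hpq _ _ _ _ hk]
  ring

lemma mul_apply' (e₁ e₂ :
    EuclideanSpace ℝ (Fin (p + q + 1)) ≃ₗ[ℝ] EuclideanSpace ℝ (Fin (p + q + 1))) (x) :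
    (e₁ * e₂) x = e₁ (e₂ x) := rfl

lemma Af_zpow (k : ℕ) (hk : k < p + 1) (n : ℤ) :
    ∀ x, Af p q k ((gmap p q hpq ^ n) x) = 3 ^ n * Af p q k x := by
  induction n using Int.induction_on with
  | zero => simp
  | succ m ih =>
    intro x
    have h1 : (gmap p q hpq ^ ((m : ℤ) + 1)) x = (gmap p q hpq ^ (m : ℤ)) (gmap p q hpq x) := by
      rw [zpow_add_one, mul_apply']
    rw [h1, ih, Af_gmap p q hpq k hk, zpow_add_one₀ (by norm_num : (3:ℝ) ≠ 0)]
    ring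
  | pred m ih =>
    intro x
    have h1 : (gmap p q hpq ^ (-(m : ℤ) - 1)) x
        = (gmap p q hpq ^ (-(m : ℤ))) ((gmap p q hpq).symm x) := by
      rw [zpow_sub_one, mul_apply']
      rfl
    rw [h1, ih, Af_gmap_symm p q hpq k hk, zpow_sub_one₀ (by norm_num : (3:ℝ) ≠ 0)]
    ring

lemma Bf_zpow (k : ℕ) (hk : k < p + 1) (n : ℤ) :
    ∀ x, Bf p q k ((gmap p q hpq ^ n) x) = 3 ^ (-n) * Bf p q k x := by
  induction n using Int.induction_on with
  | zero => simp
  | succ m ih =>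
    intro x
    have h1 : (gmap p q hpq ^ ((m : ℤ) + 1)) x = (gmap p q hpq ^ (m : ℤ)) (gmap p q hpq x) := by
      rw [zpow_add_one, mul_apply']
    rw [h1, ih, Bf_gmap p q hpq k hk, neg_add, zpow_add₀ (by norm_num : (3:ℝ) ≠ 0)]
    rw [zpow_neg_one]
    ring
  | pred m ih =>
    intro x
    have h1 : (gmap p q hpq ^ (-(m : ℤ) - 1)) x
        = (gmap p q hpq ^ (-(m : ℤ))) ((gmap p q hpq).symm x) := by
      rw [zpow_sub_one, mul_apply']
      rfl
    rw [h1, ih, Bf_gmap_symm p q hpq k hk, neg_sub', zpow_sub₀ (by norm_num : (3:ℝ) ≠ 0)]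
    rw [zpow_neg_one]  -- maybe not needed
    ring

/-- splitting of the quadratic form -/
lemma Q_split (hpq : p < q) (x : EuclideanSpace ℝ (Fin (p + q + 1))) :
    spaceFormQ p q x =
      (∑ k ∈ Finset.range (p + 1), ((xv p q x k) ^ 2 - (xv p q x (k + (p + 1))) ^ 2)) -
      ∑ j ∈ Finset.range (q - (p + 1)), (xv p q x (j + (2 * p + 2))) ^ 2 := by
  classical
  set f : ℕ → ℝ := fun n =>
    if n < p + 1 then (xv p q x n) ^ 2 else -((xv p q x n) ^ 2) with hf
  have h1 : spaceFormQ p q x = ∑ n ∈ Finset.range (p + q + 1), f n := by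
    rw [spaceFormQ, ← Fin.sum_univ_eq_sum_range f]
    refine Finset.sum_congr rfl fun i _ => ?_
    simp only [hf, xv_mk p q x i.1 i.2, Fin.eta]
  have h2 : (∑ n ∈ Finset.range (p + q + 1), f n)
      = ∑ n ∈ Finset.range ((p + 1) + ((p + 1) + (q - (p + 1)))), f n := by
    rw [show p + q + 1 = (p + 1) + ((p + 1) + (q - (p + 1))) from by omega]
  rw [h1, h2, Finset.sum_range_add f (p + 1) ((p + 1) + (q - (p + 1))),
    Finset.sum_range_add (fun n => f ((p + 1) + n)) (p + 1) (q - (p + 1))]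
  have e1 : ∑ n ∈ Finset.range (p + 1), f n
      = ∑ n ∈ Finset.range (p + 1), (xv p q x n) ^ 2 :=
    Finset.sum_congr rfl fun n hn => by
      rw [hf]; exact if_pos (Finset.mem_range.mp hn)
  have e2 : ∑ n ∈ Finset.range (p + 1), f ((p + 1) + n)
      = ∑ n ∈ Finset.range (p + 1), -((xv p q x (n + (p + 1))) ^ 2) :=
    Finset.sum_congr rfl fun n hn => by
      rw [hf, show (p + 1) + n = n + (p + 1) from by omega]
      exact if_neg (by omega)
  have e3 : ∑ n ∈ Finset.range (q - (p + 1)), f ((p + 1) + ((p + 1) + n))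
      = ∑ n ∈ Finset.range (q - (p + 1)), -((xv p q x (n + (2 * p + 2))) ^ 2) :=
    Finset.sum_congr rfl fun n hn => by
      rw [hf, show (p + 1) + ((p + 1) + n) = n + (2 * p + 2) from by omega]
      exact if_neg (by omega)
  rw [e1, e2, e3, Finset.sum_neg_distrib, Finset.sum_neg_distrib, Finset.sum_sub_distrib]
  ring

end Aux

/-- if `p < q` then `O(p+1,q)` contains an element `g` of infinite order
whose cyclic group `⟨g⟩` acts properly discontinuously on `X(p,q) = Q⁻¹(1)`:
every compact subset `C` of `X(p,q)` meets only finitely many of its translates `gⁿC`. -/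
theorem exists_infinite_order_properlyDiscontinuous (p q : ℕ) (hpq : p < q) :
    ∃ g : EuclideanSpace ℝ (Fin (p + q + 1)) ≃ₗ[ℝ] EuclideanSpace ℝ (Fin (p + q + 1)),
      (∀ z, spaceFormQ p q (g z) = spaceFormQ p q z) ∧
      ¬ IsOfFinOrder g ∧
      ∀ C : Set (EuclideanSpace ℝ (Fin (p + q + 1))),
        C ⊆ {x | spaceFormQ p q x = 1} → IsCompact C →
        ({n : ℤ | (((g ^ n :
            EuclideanSpace ℝ (Fin (p + q + 1)) ≃ₗ[ℝ] EuclideanSpace ℝ (Fin (p + q + 1)))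
              '' C) ∩ C).Nonempty}).Finite := by
  refine ⟨gmap p q hpq, fun z => ?_, ?_, ?_⟩
  · -- Q invariance
    rw [Q_split p q hpq, Q_split p q hpq]
    congr 1
    · refine Finset.sum_congr rfl fun k hk => ?_
      have hk' := Finset.mem_range.mp hk
      rw [gmap_apply, bmap_lo p q hpq _ _ _ _ hk', bmap_hi p q hpq _ _ _ _ hk']
      ring
    · refine Finset.sum_congr rfl fun j hj => ?_
      rw [gmap_apply, bmap_rest p q hpq _ _ _ _ (by omega)]
  · -- infinite order
    intro hfin
    obtain ⟨m, hm0, hgm⟩ := isOfFinOrder_iff_pow_eq_one.mp hfin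
    set x0 : EuclideanSpace ℝ (Fin (p + q + 1)) :=
      EuclideanSpace.single (⟨0, by omega⟩ : Fin (p + q + 1)) (1 : ℝ) with hx0
    have hA : Af p q 0 x0 = 1 := by
      unfold Af
      rw [xv_mk p q _ 0 (by omega), xv_mk p q _ (0 + (p + 1)) (by omega)]
      simp [hx0, EuclideanSpace.single_apply, Fin.ext_iff]
    have key := Af_zpow p q hpq 0 (by omega) (m : ℤ) x0
    rw [zpow_natCast, hgm, hA] at key
    simp only [LinearEquiv.coe_one, id_eq, hA] at key
    rw [zpow_natCast] at key
    have h3 : (1 : ℝ) < 3 ^ m := one_lt_pow₀ (by norm_num) hm0.ne'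
    rw [mul_one] at key
    linarith
  · -- proper discontinuity
    intro C hCX hC
    obtain ⟨M0, hM0⟩ := isBounded_iff_forall_norm_le.mp hC.isBounded
    set M : ℝ := max M0 1 with hM
    have hM1 : (1 : ℝ) ≤ M := le_max_right _ _
    have hMx : ∀ x ∈ C, ‖x‖ ≤ M := fun x hx => (hM0 x hx).trans (le_max_left _ _)
    have hcoord : ∀ x ∈ C, ∀ n : ℕ, |xv p q x n| ≤ M := by
      intro x hx n
      unfold xv
      split_ifs with h
      · have h1 : |x ⟨n, h⟩| ≤ ‖x‖ := by
          have h2 : ‖x‖ = √(∑ i, ‖x i‖ ^ 2) := EuclideanSpace.norm_eq x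
          have h3 : ‖x ⟨n, h⟩‖ ^ 2 ≤ ∑ i, ‖x i‖ ^ 2 :=
            Finset.single_le_sum (f := fun i => ‖x i‖ ^ 2)
              (fun i _ => sq_nonneg _) (Finset.mem_univ _)
          have h4 : |x ⟨n, h⟩| = √(‖x ⟨n, h⟩‖ ^ 2) := by
            rw [Real.sqrt_sq (norm_nonneg _)]
            rfl
          rw [h4, h2]
          exact Real.sqrt_le_sqrt h3
        exact h1.trans (hMx x hx)
      · simp only [abs_zero]
        linarith
    have hAb : ∀ x ∈ C, ∀ k : ℕ, |Af p q k x| ≤ 2 * M := by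
      intro x hx k
      unfold Af
      calc |xv p q x k + xv p q x (k + (p + 1))| ≤ |xv p q x k| + |xv p q x (k + (p + 1))| :=
            abs_add_le _ _
        _ ≤ 2 * M := by linarith [hcoord x hx k, hcoord x hx (k + (p + 1))]
    have hBb : ∀ x ∈ C, ∀ k : ℕ, |Bf p q k x| ≤ 2 * M := by
      intro x hx k
      unfold Bf
      calc |xv p q x k - xv p q x (k + (p + 1))| ≤ |xv p q x k| + |xv p q x (k + (p + 1))| :=
            abs_sub _ _
        _ ≤ 2 * M := by linarith [hcoord x hx k, hcoord x hx (k + (p + 1))]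
    set K : ℝ := ((p : ℝ) + 1) * (2 * M) * (2 * M) with hK
    have main : ∀ n : ℤ,
        (((gmap p q hpq ^ n :
          EuclideanSpace ℝ (Fin (p + q + 1)) ≃ₗ[ℝ] EuclideanSpace ℝ (Fin (p + q + 1)))
            '' C) ∩ C).Nonempty → (3 : ℝ) ^ n ≤ K ∧ (3 : ℝ) ^ (-n) ≤ K := by
      intro n hn
      obtain ⟨y, ⟨x, hxC, rfl⟩, hyC⟩ := hn
      have hQx : spaceFormQ p q x = 1 := hCX hxC
      have hterm : ∀ k : ℕ, Af p q k x * Bf p q k x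
          = xv p q x k ^ 2 - xv p q x (k + (p + 1)) ^ 2 := by
        intro k; unfold Af Bf; ring
      have hsum : 1 ≤ ∑ k ∈ Finset.range (p + 1), Af p q k x * Bf p q k x := by
        have hsplit := Q_split p q hpq x
        rw [hQx] at hsplit
        have hS2 : 0 ≤ ∑ j ∈ Finset.range (q - (p + 1)), (xv p q x (j + (2 * p + 2))) ^ 2 :=
          Finset.sum_nonneg fun j _ => sq_nonneg _
        simp_rw [hterm]
        linarith
      have hex : ∃ k ∈ Finset.range (p + 1), 1 / ((p : ℝ) + 1) ≤ Af p q k x * Bf p q k x := by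
        by_contra hcon
        push_neg at hcon
        have hlt : ∑ k ∈ Finset.range (p + 1), Af p q k x * Bf p q k x
            < ∑ k ∈ Finset.range (p + 1), 1 / ((p : ℝ) + 1) :=
          Finset.sum_lt_sum_of_nonempty Finset.nonempty_range_add_one hcon
        rw [Finset.sum_const, Finset.card_range, nsmul_eq_mul] at hlt
        have hp1 : (0 : ℝ) < (p : ℝ) + 1 := by positivity
        rw [show ((p + 1 : ℕ) : ℝ) * (1 / ((p : ℝ) + 1)) = 1 from by push_cast; field_simp] at hlt
        linarith
      obtain ⟨k, hkmem, hk1⟩ := hex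
      have hk := Finset.mem_range.mp hkmem
      set a : ℝ := |Af p q k x| with ha
      set b : ℝ := |Bf p q k x| with hb
      have hab : 1 / ((p : ℝ) + 1) ≤ a * b := by
        rw [ha, hb, ← abs_mul]
        exact hk1.trans (le_abs_self _)
      have haM : a ≤ 2 * M := hAb x hxC k
      have hbM : b ≤ 2 * M := hBb x hxC k
      have ha0 : 0 ≤ a := abs_nonneg _
      have hb0 : 0 ≤ b := abs_nonneg _
      have hp1 : (0 : ℝ) < (p : ℝ) + 1 := by positivity
      have htpos : (0 : ℝ) < 3 ^ n := zpow_pos (by norm_num) n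
      have hupos : (0 : ℝ) < 3 ^ (-n) := zpow_pos (by norm_num) (-n)
      have hAy : |Af p q k ((gmap p q hpq ^ n) x)| ≤ 2 * M := hAb _ hyC k
      have hBy : |Bf p q k ((gmap p q hpq ^ n) x)| ≤ 2 * M := hBb _ hyC k
      rw [Af_zpow p q hpq k hk n x, abs_mul, abs_of_pos htpos, ← ha] at hAy
      rw [Bf_zpow p q hpq k hk n x, abs_mul, abs_of_pos hupos, ← hb] at hBy
      constructor
      · have h1 := mul_le_mul hAy hbM hb0 (by linarith : (0:ℝ) ≤ 2 * M)
        have h2 := mul_le_mul_of_nonneg_left hab htpos.le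
        have h3 : (3:ℝ) ^ n * (a * b) = 3 ^ n * a * b := by ring
        have hchain : (3:ℝ) ^ n * (1 / ((p : ℝ) + 1)) ≤ (2 * M) * (2 * M) := by linarith
        have h5 := mul_le_mul_of_nonneg_right hchain hp1.le
        have h6 : (3:ℝ) ^ n * (1 / ((p : ℝ) + 1)) * ((p : ℝ) + 1) = 3 ^ n := by
          rw [mul_one_div, div_mul_cancel₀ _ (ne_of_gt hp1)]
        rw [h6] at h5
        rw [hK]
        linarith
      · have h1 := mul_le_mul hBy haM ha0 (by linarith : (0:ℝ) ≤ 2 * M)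
        have h2 := mul_le_mul_of_nonneg_left hab hupos.le
        have h3 : (3:ℝ) ^ (-n) * (a * b) = 3 ^ (-n) * b * a := by ring
        have hchain : (3:ℝ) ^ (-n) * (1 / ((p : ℝ) + 1)) ≤ (2 * M) * (2 * M) := by linarith
        have h5 := mul_le_mul_of_nonneg_right hchain hp1.le
        have h6 : (3:ℝ) ^ (-n) * (1 / ((p : ℝ) + 1)) * ((p : ℝ) + 1) = 3 ^ (-n) := by
          rw [mul_one_div, div_mul_cancel₀ _ (ne_of_gt hp1)]
        rw [h6] at h5
        rw [hK]
        linarith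
    obtain ⟨m, hmK⟩ := pow_unbounded_of_one_lt K (by norm_num : (1 : ℝ) < 3)
    refine Set.Finite.subset (Set.finite_Icc (-(m : ℤ)) (m : ℤ)) ?_
    intro n hn
    obtain ⟨hn1, hn2⟩ := main n hn
    rw [Set.mem_Icc]
    constructor
    · by_contra hc
      push_neg at hc
      have : (3 : ℝ) ^ (m : ℤ) ≤ 3 ^ (-n) :=
        zpow_le_zpow_right₀ (by norm_num) (by omega)
      rw [zpow_natCast] at this
      linarith
    · by_contra hc
      push_neg at hc
      have : (3 : ℝ) ^ (m : ℤ) ≤ 3 ^ n :=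
        zpow_le_zpow_right₀ (by norm_num) (by omega)
      rw [zpow_natCast] at this
      linarith
end

section
/- Suppose H is a closed non-compact subgroup of a locally compact Hausdorff group G and Γ is a discrete subgroup of G such that Γ\G is compact and Γ acts properly discontinuously on G/H. Then Γ is finite. Equivalently, a cocompact lattice in G never acts properly discontinuously on G/H by an infinite group when H is non-compact. -/
open scoped Pointwise

/-- if `H` is a closed non-compact subgroup of a locally compact,
σ-compact Hausdorff group `G`, and `Γ` is a discrete subgroup of `G` with `Γ\G` compact
which acts properly discontinuously on `G/H`, then `Γ` is finite.  Equivalently, a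
cocompact lattice in `G` never acts properly discontinuously on `G/H` by an infinite
group when `H` is non-compact. -/
theorem cocompact_lattice_not_properly_discontinuous
    (G : Type*) [Group G] [TopologicalSpace G] [IsTopologicalGroup G]
    [LocallyCompactSpace G] [T2Space G] [SigmaCompactSpace G]
    (H : Subgroup G) (hHclosed : IsClosed (H : Set G)) (hHnc : ¬ IsCompact (H : Set G))
    (Γ : Subgroup G) (hΓ : DiscreteTopology Γ) (hcocompact : CompactSpace (G ⧸ Γ))
    (hpd : ∀ C : Set (G ⧸ H), IsCompact C →
      ({γ : Γ | ((fun x => (γ : G) • x) '' C ∩ C).Nonempty}).Finite) :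
    Finite Γ := by
  -- Step 1: there is a compact set `K ⊆ G` with `K * Γ = G`.
  obtain ⟨K, hK, hKsurj⟩ :
      ∃ K : Set G, IsCompact K ∧ ∀ g : G, ∃ k ∈ K, (k : G ⧸ Γ) = (g : G ⧸ Γ) := by
    set E := CompactExhaustion.choice G
    -- images of interiors of exhaustion sets form a monotone open cover of `G ⧸ Γ`
    have hcover : (Set.univ : Set (G ⧸ Γ)) ⊆
        ⋃ n : ℕ, QuotientGroup.mk '' interior (E (n + 1)) := by
      rintro q -
      obtain ⟨g, rfl⟩ := QuotientGroup.mk_surjective q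
      obtain ⟨n, hn⟩ := E.exists_mem g
      exact Set.mem_iUnion.2 ⟨n, ⟨g, E.subset_interior_succ n hn, rfl⟩⟩
    obtain ⟨t, ht⟩ := isCompact_univ.elim_finite_subcover
      (fun n : ℕ => QuotientGroup.mk '' interior (E (n + 1)))
      (fun n => QuotientGroup.isOpenMap_coe _ isOpen_interior) hcover
    refine ⟨E (t.sup id + 1), E.isCompact _, fun g => ?_⟩
    have := ht (Set.mem_univ ((g : G ⧸ Γ)))
    obtain ⟨n, hnt, k, hk, hkeq⟩ := by
      simpa using this
    exact ⟨k, E.subset (by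
      have : n ≤ t.sup id := Finset.le_sup (f := id) hnt
      omega) (interior_subset hk), hkeq⟩
  -- Step 2: consider the compact set `C = π(K⁻¹ ∪ {1}) ⊆ G ⧸ H`.
  set C : Set (G ⧸ H) := QuotientGroup.mk '' (K⁻¹ ∪ {1}) with hCdef
  have hCcomp : IsCompact C :=
    (hK.inv.union isCompact_singleton).image continuous_quotient_mk'
  have hS := hpd C hCcomp
  -- Step 3: `H` is contained in `K * S` where `S` is the finite set from proper discontinuity.
  have hsub : (H : Set G) ⊆
      K * (Subtype.val '' {γ : Γ | ((fun x => (γ : G) • x) '' C ∩ C).Nonempty}) := by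
    intro h hh
    obtain ⟨k, hk, hkeq⟩ := hKsurj h
    have hγ : k⁻¹ * h ∈ Γ := QuotientGroup.eq.mp hkeq
    have hγS : (⟨k⁻¹ * h, hγ⟩ : Γ) ∈
        {γ : Γ | ((fun x => (γ : G) • x) '' C ∩ C).Nonempty} := by
      refine ⟨QuotientGroup.mk (k⁻¹ : G), ⟨QuotientGroup.mk (1 : G), ?_, ?_⟩, ?_⟩
      · exact ⟨1, Set.mem_union_right _ rfl, rfl⟩
      · show ((k⁻¹ * h : G) • (QuotientGroup.mk (1 : G)) : G ⧸ H) = _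
        rw [MulAction.Quotient.smul_mk]
        exact (QuotientGroup.eq).mpr (by
          show ((k⁻¹ * h) • (1 : G))⁻¹ * k⁻¹ ∈ H
          simpa [smul_eq_mul, mul_assoc] using H.inv_mem hh)
      · exact ⟨k⁻¹, Set.mem_union_left _ (Set.inv_mem_inv.mpr hk), rfl⟩
    exact ⟨k, hk, k⁻¹ * h, ⟨⟨k⁻¹ * h, hγ⟩, hγS, rfl⟩, by group⟩
  -- Step 4: hence `H` is compact, a contradiction.
  have hKS : IsCompact
      (K * (Subtype.val '' {γ : Γ | ((fun x => (γ : G) • x) '' C ∩ C).Nonempty})) :=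
    hK.mul (hS.image _).isCompact
  exact absurd (hKS.of_isClosed_subset hHclosed hsub) hHnc
end
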